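/- With the setup of the sequential iterative best response update (finite $\mathcal{F}$, symmetric nonnegative $\psi$, densities $p_i^{(k)} > 0$, each agent $i$ updating by $p_i^{(k+1)}(f) \propto p_i^{(k)}(f)\exp(-\bar\gamma_i^{(k)}(f))$ where $\bar\gamma_i^{(k)}(f) = \sum_{j<i}\sum_g \psi(f,g)p_j^{(k+1)}(g) + \sum_{j>i}\sum_g \psi(f,g)p_j^{(k)}(g)$), if $p_i^{(k+1)} \ne p_i^{(k)}$ for some $i$, then $J_c(p_0^{(k+1)},\dots,p_n^{(k+1)}) < J_c(p_0^{(k)},\dots,p_n^{(k)})$, i.e., the joint expected collision penalty strictly decreases in one full round of updates. -/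
import Mathlib

open Finset

variable {F : Type*} [Fintype F]

/-- Expected collision penalty between two densities. -/
def cpen (ψ : F → F → ℝ) (p q : F → ℝ) : ℝ :=
  ∑ f, ∑ g, ψ f g * p f * q g

/-- Joint expected collision penalty of a family of densities. -/
def Jc {n : ℕ} (ψ : F → F → ℝ) (p : Fin (n + 1) → F → ℝ) : ℝ :=
  ∑ i, ∑ j ∈ Finset.univ.filter (fun j => i < j), cpen ψ (p i) (p j)

/-- Sequentially defined interaction penalty `γ̄ᵢ` for agent `i`. -/
def gammaBar {n : ℕ} (ψ : F → F → ℝ) (pk pk1 : Fin (n + 1) → F → ℝ)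
    (i : Fin (n + 1)) (f : F) : ℝ :=
  (∑ j ∈ Finset.univ.filter (fun j => j < i), ∑ g, ψ f g * pk1 j g) +
    ∑ j ∈ Finset.univ.filter (fun j => i < j), ∑ g, ψ f g * pk j g

/-- Gibbs inequality, non-strict. -/
lemma gibbs_le (p q : F → ℝ) (hp : ∀ f, 0 < p f) (hq : ∀ f, 0 < q f)
    (hps : ∑ f, p f = 1) (hqs : ∑ f, q f = 1) :
    ∑ f, p f * Real.log (q f / p f) ≤ 0 := by
  have h1 : ∑ f, p f * Real.log (q f / p f) ≤ ∑ f, p f * (q f / p f - 1) :=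
    Finset.sum_le_sum fun f _ =>
      mul_le_mul_of_nonneg_left (Real.log_le_sub_one_of_pos (div_pos (hq f) (hp f))) (hp f).le
  have h2 : ∑ f, p f * (q f / p f - 1) = 0 := by
    have he : ∀ f, p f * (q f / p f - 1) = q f - p f := fun f => by
      rw [mul_sub, mul_one, mul_div_cancel₀ _ (hp f).ne']
    rw [Finset.sum_congr rfl fun f _ => he f, Finset.sum_sub_distrib, hps, hqs]
    ring
  linarith

/-- Gibbs inequality, strict. -/
lemma gibbs_lt (p q : F → ℝ) (hp : ∀ f, 0 < p f) (hq : ∀ f, 0 < q f)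
    (hps : ∑ f, p f = 1) (hqs : ∑ f, q f = 1) (hne : p ≠ q) :
    ∑ f, p f * Real.log (q f / p f) < 0 := by
  obtain ⟨f0, hf0⟩ : ∃ f, p f ≠ q f := by
    by_contra h
    push_neg at h
    exact hne (funext h)
  have h1 : ∑ f, p f * Real.log (q f / p f) < ∑ f, p f * (q f / p f - 1) := by
    apply Finset.sum_lt_sum
    · exact fun f _ =>
        mul_le_mul_of_nonneg_left (Real.log_le_sub_one_of_pos (div_pos (hq f) (hp f))) (hp f).le
    · refine ⟨f0, Finset.mem_univ f0, ?_⟩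
      have hne1 : q f0 / p f0 ≠ 1 := by
        intro h
        exact hf0 ((div_eq_one_iff_eq (hp f0).ne').mp h).symm
      exact mul_lt_mul_of_pos_left (Real.log_lt_sub_one_of_pos (div_pos (hq f0) (hp f0)) hne1) (hp f0)
  have h2 : ∑ f, p f * (q f / p f - 1) = 0 := by
    have he : ∀ f, p f * (q f / p f - 1) = q f - p f := fun f => by
      rw [mul_sub, mul_one, mul_div_cancel₀ _ (hp f).ne']
    rw [Finset.sum_congr rfl fun f _ => he f, Finset.sum_sub_distrib, hps, hqs]
    ring
  linarith

/-- The key variational lemma: the Gibbs-reweighted density decreases the linear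
functional, strictly if it actually changed. -/
lemma key_step [Nonempty F] (γ p p' : F → ℝ) (hp : ∀ f, 0 < p f) (hps : ∑ f, p f = 1)
    (hp' : ∀ f, 0 < p' f) (hp's : ∑ f, p' f = 1)
    (h : ∀ f, p' f = p f * Real.exp (-γ f) / ∑ g, p g * Real.exp (-γ g)) :
    (∑ f, p' f * γ f ≤ ∑ f, p f * γ f) ∧
      (p' ≠ p → ∑ f, p' f * γ f < ∑ f, p f * γ f) := by
  set Z : ℝ := ∑ g, p g * Real.exp (-γ g) with hZdef
  have hZ : 0 < Z :=
    Finset.sum_pos (fun g _ => mul_pos (hp g) (Real.exp_pos _)) Finset.univ_nonempty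
  have hlog : ∀ f, Real.log (p' f / p f) = -γ f - Real.log Z := by
    intro f
    have hq : p' f / p f = Real.exp (-γ f) / Z := by
      rw [h f, div_div, mul_comm Z (p f), ← div_div, mul_div_cancel_left₀ _ (hp f).ne']
    rw [hq, Real.log_div (Real.exp_ne_zero _) hZ.ne', Real.log_exp]
  have hlog2 : ∀ f, Real.log (p f / p' f) = γ f + Real.log Z := by
    intro f
    have e1 := hlog f
    rw [Real.log_div (hp' f).ne' (hp f).ne'] at e1
    rw [Real.log_div (hp f).ne' (hp' f).ne']
    linarith
  -- Gibbs (p', p) : ∑ p' γ ≤ - log Z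
  have g1 : ∑ f, p' f * γ f + Real.log Z ≤ 0 := by
    have := gibbs_le p' p hp' hp hp's hps
    have e : ∑ f, p' f * Real.log (p f / p' f) = ∑ f, p' f * γ f + Real.log Z := by
      rw [Finset.sum_congr rfl fun f _ => by rw [hlog2 f]]
      rw [Finset.sum_congr rfl (fun f _ => mul_add (p' f) (γ f) (Real.log Z)),
        Finset.sum_add_distrib, ← Finset.sum_mul, hp's, one_mul]
    linarith [e ▸ this]
  -- Gibbs (p, p') : - log Z ≤ ∑ p γ, strict if p ≠ p'
  have e2 : ∑ f, p f * Real.log (p' f / p f) = -(∑ f, p f * γ f) - Real.log Z := by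
    rw [Finset.sum_congr rfl fun f _ => by rw [hlog f]]
    have : ∀ f, p f * (-γ f - Real.log Z) = -(p f * γ f) - p f * Real.log Z := fun f => by ring
    rw [Finset.sum_congr rfl fun f _ => this f, Finset.sum_sub_distrib, Finset.sum_neg_distrib,
      ← Finset.sum_mul, hps, one_mul]
  constructor
  · have := gibbs_le p p' hp hp' hps hp's
    linarith [e2 ▸ this]
  · intro hne
    have hne' : p ≠ p' := fun h => hne h.symm
    have := gibbs_lt p p' hp hp' hps hp's hne'
    linarith [e2 ▸ this]

lemma cpen_symm' (ψ : F → F → ℝ) (hψ : ∀ f g, ψ f g = ψ g f) (p q : F → ℝ) :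
    cpen ψ p q = cpen ψ q p := by
  unfold cpen
  rw [Finset.sum_comm]
  exact Finset.sum_congr rfl fun g _ => Finset.sum_congr rfl fun f _ => by rw [hψ]; ring

lemma cpen_add_left (ψ : F → F → ℝ) (u v w : F → ℝ) :
    cpen ψ (fun f => u f + v f) w = cpen ψ u w + cpen ψ v w := by
  unfold cpen
  rw [← Finset.sum_add_distrib]
  exact Finset.sum_congr rfl fun f _ => by
    rw [← Finset.sum_add_distrib]
    exact Finset.sum_congr rfl fun g _ => by ring

lemma cpen_add_right (ψ : F → F → ℝ) (u v w : F → ℝ) :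
    cpen ψ w (fun f => u f + v f) = cpen ψ w u + cpen ψ w v := by
  unfold cpen
  rw [← Finset.sum_add_distrib]
  exact Finset.sum_congr rfl fun f _ => by
    rw [← Finset.sum_add_distrib]
    exact Finset.sum_congr rfl fun g _ => by ring

lemma cpen_sum_left {ι : Type*} [DecidableEq ι] (ψ : F → F → ℝ) (s : Finset ι)
    (P : ι → F → ℝ) (r : F → ℝ) :
    cpen ψ (fun f => ∑ j ∈ s, P j f) r = ∑ j ∈ s, cpen ψ (P j) r := by
  induction s using Finset.induction_on with
  | empty => simp [cpen]
  | @insert a s ha ih =>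
    have h1 : (fun f => ∑ j ∈ insert a s, P j f) = fun f => P a f + ∑ j ∈ s, P j f :=
      funext fun f => Finset.sum_insert ha
    rw [h1, cpen_add_left, ih, Finset.sum_insert ha]

lemma cpen_sum_right {ι : Type*} [DecidableEq ι] (ψ : F → F → ℝ) (s : Finset ι)
    (P : ι → F → ℝ) (r : F → ℝ) :
    cpen ψ r (fun f => ∑ j ∈ s, P j f) = ∑ j ∈ s, cpen ψ r (P j) := by
  induction s using Finset.induction_on with
  | empty => simp [cpen]
  | @insert a s ha ih =>
    have h1 : (fun f => ∑ j ∈ insert a s, P j f) = fun f => P a f + ∑ j ∈ s, P j f :=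
      funext fun f => Finset.sum_insert ha
    rw [h1, cpen_add_right, ih, Finset.sum_insert ha]

lemma cpen_eq_weight (ψ : F → F → ℝ) (r s : F → ℝ) :
    cpen ψ r s = ∑ f, r f * ∑ g, ψ f g * s g := by
  unfold cpen
  exact Finset.sum_congr rfl fun f _ => by
    rw [Finset.mul_sum]
    exact Finset.sum_congr rfl fun g _ => by ring

lemma Jc_eq {n : ℕ} (ψ : F → F → ℝ) (hψ : ∀ f g, ψ f g = ψ g f) (p : Fin (n + 1) → F → ℝ) :
    Jc ψ p = (cpen ψ (fun f => ∑ i, p i f) (fun f => ∑ i, p i f)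
      - ∑ i, cpen ψ (p i) (p i)) / 2 := by
  have htot : cpen ψ (fun f => ∑ i, p i f) (fun f => ∑ i, p i f)
      = ∑ i, ∑ j, cpen ψ (p i) (p j) := by
    rw [cpen_sum_left]
    exact Finset.sum_congr rfl fun i _ => cpen_sum_right ψ Finset.univ p (p i)
  have hsplit : ∀ i j : Fin (n + 1), cpen ψ (p i) (p j)
      = (if i < j then cpen ψ (p i) (p j) else 0)
        + (if j < i then cpen ψ (p i) (p j) else 0)
        + (if i = j then cpen ψ (p i) (p j) else 0) := by
    intro i j
    rcases lt_trichotomy i j with h | h | h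
    · simp [h, asymm h, h.ne]
    · simp [h]
    · simp [h, asymm h, h.ne']
  have h2 : ∑ i, ∑ j, cpen ψ (p i) (p j)
      = Jc ψ p + Jc ψ p + ∑ i, cpen ψ (p i) (p i) := by
    calc ∑ i, ∑ j, cpen ψ (p i) (p j)
        = ∑ i : Fin (n + 1), ∑ j : Fin (n + 1), ((if i < j then cpen ψ (p i) (p j) else 0)
          + (if j < i then cpen ψ (p i) (p j) else 0)
          + (if i = j then cpen ψ (p i) (p j) else 0)) :=
          Finset.sum_congr rfl fun i _ => Finset.sum_congr rfl fun j _ => hsplit i j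
      _ = (∑ i, ∑ j, if i < j then cpen ψ (p i) (p j) else 0)
          + (∑ i, ∑ j, if j < i then cpen ψ (p i) (p j) else 0)
          + (∑ i, ∑ j, if i = j then cpen ψ (p i) (p j) else 0) := by
          simp only [Finset.sum_add_distrib]
      _ = Jc ψ p + Jc ψ p + ∑ i, cpen ψ (p i) (p i) := by
          congr 1
          · congr 1
            · exact (Finset.sum_congr rfl fun i _ => (Finset.sum_filter _ _)).symm
            · rw [Finset.sum_comm]
              unfold Jc
              refine Finset.sum_congr rfl fun i _ => ?_
              rw [← Finset.sum_filter]
              exact Finset.sum_congr rfl fun j _ => cpen_symm' ψ hψ _ _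
          · exact Finset.sum_congr rfl fun i _ => by simp
  rw [htot, h2]
  ring

/-- One full round of the sequential iterative best response update
    strictly decreases the joint expected collision penalty, provided some agent's
    preference actually changed. -/
theorem sequential_IBR_strict_decrease
    {F : Type*} [Fintype F] [Nonempty F] {n : ℕ}
    (ψ : F → F → ℝ) (hψ_nonneg : ∀ f g, 0 ≤ ψ f g)
    (hψ_symm : ∀ f g, ψ f g = ψ g f)
    (pk pk1 : Fin (n + 1) → F → ℝ)
    (hpk_pos : ∀ i f, 0 < pk i f) (hpk_sum : ∀ i, ∑ f, pk i f = 1)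
    (hupdate : ∀ i f, pk1 i f =
      pk i f * Real.exp (-(gammaBar ψ pk pk1 i f)) /
        ∑ g, pk i g * Real.exp (-(gammaBar ψ pk pk1 i g)))
    (hchange : ∃ i, pk1 i ≠ pk i) :
    Jc ψ pk1 < Jc ψ pk := by
  classical
  have hZpos : ∀ i : Fin (n + 1), 0 < ∑ g, pk i g * Real.exp (-(gammaBar ψ pk pk1 i g)) :=
    fun i => Finset.sum_pos (fun g _ => mul_pos (hpk_pos i g) (Real.exp_pos _))
      Finset.univ_nonempty
  have hpk1_pos : ∀ i f, 0 < pk1 i f := fun i f => by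
    rw [hupdate i f]
    exact div_pos (mul_pos (hpk_pos i f) (Real.exp_pos _)) (hZpos i)
  have hpk1_sum : ∀ i, ∑ f, pk1 i f = 1 := fun i => by
    rw [Finset.sum_congr rfl fun f _ => hupdate i f, ← Finset.sum_div, div_self (hZpos i).ne']
  have hkey : ∀ i : Fin (n + 1),
      (∑ f, pk1 i f * gammaBar ψ pk pk1 i f ≤ ∑ f, pk i f * gammaBar ψ pk pk1 i f)
      ∧ (pk1 i ≠ pk i →
          ∑ f, pk1 i f * gammaBar ψ pk pk1 i f < ∑ f, pk i f * gammaBar ψ pk pk1 i f) :=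
    fun i => key_step (gammaBar ψ pk pk1 i) (pk i) (pk1 i) (hpk_pos i) (hpk_sum i)
      (hpk1_pos i) (hpk1_sum i) (hupdate i)
  set Q : ℕ → Fin (n + 1) → F → ℝ := fun m i => if (i : ℕ) < m then pk1 i else pk i with hQ
  have hQ0 : Q 0 = pk := funext fun i => by simp [hQ]
  have hQtop : Q (n + 1) = pk1 := funext fun i => by simp [hQ, i.isLt]
  have hstep : ∀ M : Fin (n + 1),
      Jc ψ (Q ((M : ℕ) + 1)) - Jc ψ (Q (M : ℕ))
        = ∑ f, pk1 M f * gammaBar ψ pk pk1 M f - ∑ f, pk M f * gammaBar ψ pk pk1 M f := by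
    intro M
    have hQm_M : Q (M : ℕ) M = pk M := by simp [hQ]
    have hQm1_M : Q ((M : ℕ) + 1) M = pk1 M := by simp [hQ]
    have hQeq : ∀ j : Fin (n + 1), j ≠ M → Q ((M : ℕ) + 1) j = Q (M : ℕ) j := by
      intro j hj
      have hne : (j : ℕ) ≠ (M : ℕ) := fun h => hj (Fin.ext h)
      simp only [hQ]
      by_cases h : (j : ℕ) < (M : ℕ)
      · rw [if_pos h, if_pos (by omega)]
      · rw [if_neg h, if_neg (by omega)]
    set S0 : F → ℝ := fun f => ∑ j ∈ Finset.univ.erase M, Q (M : ℕ) j f with hS0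
    have htot1 : (fun f => ∑ i, Q ((M : ℕ) + 1) i f) = fun f => pk1 M f + S0 f := by
      funext f
      rw [← Finset.add_sum_erase _ _ (Finset.mem_univ M), hQm1_M]
      simp only [hS0]
      congr 1
      exact Finset.sum_congr rfl fun j hj => by
        rw [hQeq j (Finset.ne_of_mem_erase hj)]
    have htot0 : (fun f => ∑ i, Q (M : ℕ) i f) = fun f => pk M f + S0 f := by
      funext f
      rw [← Finset.add_sum_erase _ _ (Finset.mem_univ M), hQm_M]
    have hdiag1 : ∑ i, cpen ψ (Q ((M : ℕ) + 1) i) (Q ((M : ℕ) + 1) i)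
        = cpen ψ (pk1 M) (pk1 M)
          + ∑ i ∈ Finset.univ.erase M, cpen ψ (Q (M : ℕ) i) (Q (M : ℕ) i) := by
      rw [← Finset.add_sum_erase _ _ (Finset.mem_univ M), hQm1_M]
      congr 1
      exact Finset.sum_congr rfl fun j hj => by
        rw [hQeq j (Finset.ne_of_mem_erase hj)]
    have hdiag0 : ∑ i, cpen ψ (Q (M : ℕ) i) (Q (M : ℕ) i)
        = cpen ψ (pk M) (pk M)
          + ∑ i ∈ Finset.univ.erase M, cpen ψ (Q (M : ℕ) i) (Q (M : ℕ) i) := by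
      rw [← Finset.add_sum_erase _ _ (Finset.mem_univ M), hQm_M]
    have hexp : ∀ r : F → ℝ, cpen ψ (fun f => r f + S0 f) (fun f => r f + S0 f)
        = cpen ψ r r + 2 * cpen ψ r S0 + cpen ψ S0 S0 := by
      intro r
      rw [cpen_add_left, cpen_add_right, cpen_add_right, cpen_symm' ψ hψ_symm S0 r]
      ring
    have hw : ∀ r : F → ℝ, cpen ψ r S0 = ∑ f, r f * gammaBar ψ pk pk1 M f := by
      intro r
      rw [cpen_eq_weight]
      refine Finset.sum_congr rfl fun f _ => ?_
      congr 1
      have hsw : ∑ g, ψ f g * S0 g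
          = ∑ j ∈ Finset.univ.erase M, ∑ g, ψ f g * Q (M : ℕ) j g := by
        simp only [hS0]
        rw [Finset.sum_comm]
        exact Finset.sum_congr rfl fun g _ => by rw [Finset.mul_sum]
      have hE : Finset.univ.erase M
          = Finset.univ.filter (fun j => j < M) ∪ Finset.univ.filter (fun j => M < j) := by
        ext j
        simp only [Finset.mem_erase, Finset.mem_univ, and_true, Finset.mem_union,
          Finset.mem_filter, true_and]
        constructor
        · intro h
          exact lt_or_gt_of_ne h
        · rintro (h | h)
          · exact h.ne
          · exact h.ne'
      have hdisj : Disjoint (Finset.univ.filter (fun j => j < M))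
          (Finset.univ.filter (fun j => M < j)) := by
        rw [Finset.disjoint_left]
        intro j h1 h2
        simp only [Finset.mem_filter] at h1 h2
        exact absurd h2.2 (asymm h1.2)
      rw [hsw, hE, Finset.sum_union hdisj]
      unfold gammaBar
      congr 1
      · refine Finset.sum_congr rfl fun j hj => ?_
        have hjM : j < M := (Finset.mem_filter.mp hj).2
        have : Q (M : ℕ) j = pk1 j := by
          simp only [hQ]
          rw [if_pos (by exact hjM)]
        rw [this]
      · refine Finset.sum_congr rfl fun j hj => ?_
        have hjM : M < j := (Finset.mem_filter.mp hj).2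
        have : Q (M : ℕ) j = pk j := by
          simp only [hQ]
          rw [if_neg (by exact Nat.not_lt.mpr (le_of_lt hjM))]
        rw [this]

    rw [Jc_eq ψ hψ_symm (Q ((M : ℕ) + 1)), Jc_eq ψ hψ_symm (Q (M : ℕ)), htot1, htot0,
      hdiag1, hdiag0, hexp, hexp, hw (pk1 M), hw (pk M)]
    ring
  have hle_step : ∀ M : Fin (n + 1), Jc ψ (Q ((M : ℕ) + 1)) ≤ Jc ψ (Q (M : ℕ)) := fun M => by
    have h1 := hstep M
    have h2 := (hkey M).1
    linarith
  have hchain : ∀ b a : ℕ, a ≤ b → b ≤ n + 1 → Jc ψ (Q b) ≤ Jc ψ (Q a) := by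
    intro b
    induction b with
    | zero =>
      intro a hab _
      have ha : a = 0 := Nat.le_zero.mp hab
      rw [ha]
    | succ b ih =>
      intro a hab hb
      rcases Nat.eq_or_lt_of_le hab with h | h
      · rw [h]
      · have hab' : a ≤ b := Nat.lt_succ_iff.mp h
        have hbn : b < n + 1 := by omega
        have hMb : Jc ψ (Q (b + 1)) ≤ Jc ψ (Q b) := hle_step ⟨b, hbn⟩
        exact le_trans hMb (ih a hab' (by omega))
  obtain ⟨i0, hi0⟩ := hchange
  have hstrict : Jc ψ (Q ((i0 : ℕ) + 1)) < Jc ψ (Q (i0 : ℕ)) := by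
    have h1 := hstep i0
    have h2 := (hkey i0).2 hi0
    linarith
  have hlt : (i0 : ℕ) < n + 1 := i0.isLt
  have h1 : Jc ψ (Q (n + 1)) ≤ Jc ψ (Q ((i0 : ℕ) + 1)) := hchain (n + 1) _ (by omega) le_rfl
  have h2 : Jc ψ (Q (i0 : ℕ)) ≤ Jc ψ (Q 0) := hchain (i0 : ℕ) 0 (Nat.zero_le _) (by omega)
  rw [← hQ0, ← hQtop]
  linarith
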